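/- arXiv:1302.3030 — 6 statements merged into one kernel-verified Lean document; each statement's English description precedes it below -/
import Mathlib

section
/- (Le Cam's lemma.) Let X be an observation from a distribution P_θ with θ belonging to a finite parameter set Θ = {θ_0, θ_1, …, θ_D}, let L ≥ 0 be a loss function on actions and parameters, let l_min = min_{1 ≤ i ≤ D} inf_t [ L(t, θ_0) + L(t, θ_i) ], and let P̄ = (1/D) Σ_{i=1}^D P_{θ_i}. Then for any estimator T = T(X), sup_{θ ∈ Θ} E_{X|θ} L(T, θ) ≥ (1/2) · l_min · ‖P_{θ_0} ∧ P̄‖. -/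
open MeasureTheory
open scoped ENNReal NNReal BigOperators

noncomputable section

/-- The total variation affinity `‖P ∧ Q‖ = ∫ min(p, q) dμ`, expressed intrinsically as the
total mass of the lattice infimum of the two measures. -/
def affinity {Ω : Type*} [MeasurableSpace Ω] (P Q : Measure Ω) : ℝ :=
  ((P ⊓ Q) Set.univ).toReal

/-- **Le Cam's lemma.**  Let `X ∼ P_θ`, `θ ∈ Θ = {θ_0, θ_1, …, θ_D}`, let `L ≥ 0` be a loss
function, `l_min ≤ L(t, θ_0) + L(t, θ_i)` for all actions `t` and all `i ≥ 1`, and let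
`P̄ = D⁻¹ Σ_{i=1}^D P_{θ_i}`.  Then for any estimator `T`,
`sup_θ E_{X|θ} L(T, θ) ≥ (1/2) l_min ‖P_{θ_0} ∧ P̄‖` (the supremum over the finite set `Θ`
being attained at some `θ`). -/
theorem le_cam_lemma {Ω 𝒜 : Type*} [MeasurableSpace Ω] [MeasurableSpace 𝒜]
    (D : ℕ) (hD : 1 ≤ D)
    (P : Fin (D + 1) → Measure Ω) (hP : ∀ i, IsProbabilityMeasure (P i))
    (L : 𝒜 → Fin (D + 1) → ℝ) (hL0 : ∀ t i, 0 ≤ L t i)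
    (hLmeas : ∀ i, Measurable fun t => L t i)
    (T : Ω → 𝒜) (hT : Measurable T)
    (lmin : ℝ) (hlmin : ∀ i : Fin (D + 1), i ≠ 0 → ∀ t : 𝒜, lmin ≤ L t 0 + L t i) :
    ∃ θ : Fin (D + 1),
      ENNReal.ofReal
          (1 / 2 * lmin *
            affinity (P 0)
              (((D : ℝ≥0∞))⁻¹ • ∑ i ∈ Finset.univ.filter (fun i : Fin (D + 1) => i ≠ 0), P i)) ≤
        ∫⁻ x, ENNReal.ofReal (L (T x) θ) ∂(P θ) := by
  classical
  set s : Finset (Fin (D + 1)) := Finset.univ.filter (fun i : Fin (D + 1) => i ≠ 0) with hs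
  set Pb : Measure Ω := ((D : ℝ≥0∞))⁻¹ • ∑ i ∈ s, P i with hPb
  set Q : Measure Ω := P 0 ⊓ Pb with hQ
  set aff : ℝ := affinity (P 0) Pb with haff
  -- trivial case lmin < 0
  by_cases hl : 0 ≤ lmin
  swap
  · refine ⟨0, ?_⟩
    have h1 : 1 / 2 * lmin * aff ≤ 0 :=
      mul_nonpos_of_nonpos_of_nonneg (by nlinarith) ENNReal.toReal_nonneg
    rw [ENNReal.ofReal_eq_zero.2 h1]
    exact zero_le
  -- notations
  have hone : (1 : Fin (D + 1)) ≠ 0 := by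
    have : (1 : ℕ) < D + 1 := by omega
    simp [Fin.ext_iff, Nat.mod_eq_of_lt this]
  haveI : Nonempty {i : Fin (D + 1) // i ≠ 0} := ⟨⟨1, hone⟩⟩
  set f : Ω → ℝ≥0∞ := fun x => ENNReal.ofReal (L (T x) 0) with hf
  set h : Ω → ℝ≥0∞ := fun x => ⨅ i : {i : Fin (D + 1) // i ≠ 0}, ENNReal.ofReal (L (T x) i) with hh
  set I : Fin (D + 1) → ℝ≥0∞ := fun i => ∫⁻ x, ENNReal.ofReal (L (T x) i) ∂(P i) with hI
  have hQle0 : Q ≤ P 0 := inf_le_left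
  have hQleb : Q ≤ Pb := inf_le_right
  have hQfin : Q Set.univ ≠ ⊤ := by
    have := Measure.le_iff'.1 hQle0 Set.univ
    simp [measure_univ] at this
    exact ne_top_of_le_ne_top (by simp) this
  -- measurability
  have hfm : Measurable f := (ENNReal.measurable_ofReal.comp ((hLmeas 0).comp hT))
  -- key pointwise bound
  have hpoint : ∀ x, ENNReal.ofReal lmin ≤ f x + h x := by
    intro x
    rw [hh]
    simp only
    rw [ENNReal.add_iInf]
    refine le_iInf fun i => ?_
    calc ENNReal.ofReal lmin ≤ ENNReal.ofReal (L (T x) 0 + L (T x) i) :=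
          ENNReal.ofReal_le_ofReal (hlmin i i.2 (T x))
      _ = f x + ENNReal.ofReal (L (T x) i) := ENNReal.ofReal_add (hL0 _ _) (hL0 _ _)
  -- chain of inequalities
  have step1 : ENNReal.ofReal lmin * Q Set.univ ≤ ∫⁻ x, (f x + h x) ∂Q := by
    rw [← lintegral_const]
    exact lintegral_mono hpoint
  have step2 : (∫⁻ x, (f x + h x) ∂Q) = (∫⁻ x, f x ∂Q) + ∫⁻ x, h x ∂Q :=
    lintegral_add_left hfm _
  have step3 : (∫⁻ x, f x ∂Q) ≤ I 0 := lintegral_mono' hQle0 le_rfl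
  have step4 : (∫⁻ x, h x ∂Q) ≤ ∫⁻ x, h x ∂Pb := lintegral_mono' hQleb le_rfl
  have step5 : (∫⁻ x, h x ∂Pb) = ((D : ℝ≥0∞))⁻¹ * ∑ i ∈ s, ∫⁻ x, h x ∂(P i) := by
    rw [hPb, lintegral_smul_measure, lintegral_finset_sum_measure, smul_eq_mul]
  have step6 : ∀ i ∈ s, (∫⁻ x, h x ∂(P i)) ≤ I i := by
    intro i hi
    refine lintegral_mono fun x => ?_
    have hi' : i ≠ 0 := by simpa [hs] using hi
    exact iInf_le (fun j : {i : Fin (D + 1) // i ≠ 0} => ENNReal.ofReal (L (T x) j)) ⟨i, hi'⟩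
  -- maximizer over s
  have hsne : s.Nonempty := ⟨1, by simp [hs, hone]⟩
  obtain ⟨j, hjs, hjmax⟩ := s.exists_max_image I hsne
  have hscard : s.card = D := by
    rw [hs, Finset.filter_ne', Finset.card_erase_of_mem (Finset.mem_univ _)]
    simp
  have step7 : (∑ i ∈ s, ∫⁻ x, h x ∂(P i)) ≤ D * I j := by
    calc (∑ i ∈ s, ∫⁻ x, h x ∂(P i)) ≤ ∑ i ∈ s, I i := Finset.sum_le_sum step6
      _ ≤ s.card • I j := Finset.sum_le_card_nsmul _ _ _ fun i hi => hjmax i hi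
      _ = D * I j := by rw [hscard, nsmul_eq_mul]
  have hDne : (D : ℝ≥0∞) ≠ 0 := by
    simp only [ne_eq, Nat.cast_eq_zero]; omega
  have step8 : ((D : ℝ≥0∞))⁻¹ * (D * I j) = I j := by
    rw [← mul_assoc, ENNReal.inv_mul_cancel hDne (ENNReal.natCast_ne_top D), one_mul]
  have main : ENNReal.ofReal lmin * Q Set.univ ≤ I 0 + I j := by
    calc ENNReal.ofReal lmin * Q Set.univ ≤ (∫⁻ x, f x ∂Q) + ∫⁻ x, h x ∂Q :=
          step2 ▸ step1
      _ ≤ I 0 + ∫⁻ x, h x ∂Pb := add_le_add step3 step4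
      _ = I 0 + ((D : ℝ≥0∞))⁻¹ * ∑ i ∈ s, ∫⁻ x, h x ∂(P i) := by rw [step5]
      _ ≤ I 0 + ((D : ℝ≥0∞))⁻¹ * (D * I j) := by
          gcongr
      _ = I 0 + I j := by rw [step8]
  -- pick the bigger of I 0, I j
  refine ⟨if I 0 ≤ I j then j else 0, ?_⟩
  have hmax : I 0 + I j ≤ 2 * I (if I 0 ≤ I j then j else 0) := by
    split_ifs with hle
    · calc I 0 + I j ≤ I j + I j := by gcongr
        _ = 2 * I j := (two_mul _).symm
    · have : I j ≤ I 0 := le_of_not_ge hle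
      calc I 0 + I j ≤ I 0 + I 0 := by gcongr
        _ = 2 * I 0 := (two_mul _).symm
  have hQaff : ENNReal.ofReal aff = Q Set.univ := by
    rw [haff, affinity, ← hQ, ENNReal.ofReal_toReal hQfin]
  have hLHS : ENNReal.ofReal (1 / 2 * lmin * aff)
      = 2⁻¹ * (ENNReal.ofReal lmin * Q Set.univ) := by
    rw [ENNReal.ofReal_mul (by positivity), ENNReal.ofReal_mul (by norm_num), hQaff]
    rw [mul_assoc]
    congr 1
    rw [one_div, ENNReal.ofReal_inv_of_pos (by norm_num), ENNReal.ofReal_ofNat]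
  calc ENNReal.ofReal (1 / 2 * lmin * aff)
      = 2⁻¹ * (ENNReal.ofReal lmin * Q Set.univ) := hLHS
    _ ≤ 2⁻¹ * (I 0 + I j) := by gcongr
    _ ≤ 2⁻¹ * (2 * I (if I 0 ≤ I j then j else 0)) := by gcongr
    _ = I (if I 0 ≤ I j then j else 0) := by
        rw [← mul_assoc, ENNReal.inv_mul_cancel (by norm_num) (by norm_num), one_mul]

end
end

section
/- In the sparse covariance lower-bound construction, for any θ, θ' ∈ Θ with H(γ(θ), γ(θ')) ≥ 1, the spectral norm satisfies |||Σ(θ) − Σ(θ')|||^2 / H(γ(θ), γ(θ')) ≥ (k ε_{n,p})^2 / p. Consequently α = min_{ H(γ(θ),γ(θ')) ≥ 1 } |||Σ(θ) − Σ(θ')|||^2 / H(γ(θ), γ(θ')) ≥ (k ε_{n,p})^2 / p. -/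
open MeasureTheory Real
open scoped ENNReal NNReal BigOperators

noncomputable section

/-- The vector `ℓ_w` norm on `ℝ^p`, for `1 ≤ w ≤ ∞`. -/
def vecLwNorm {p : ℕ} (w : ℝ≥0∞) (x : Fin p → ℝ) : ℝ :=
  if w = ∞ then ⨆ i, |x i| else (∑ i, |x i| ^ w.toReal) ^ (1 / w.toReal)

/-- The matrix `ℓ_w` operator norm `|||A|||_w = sup_{‖x‖_w = 1} ‖Ax‖_w`. -/
def lwOpNorm {p : ℕ} (w : ℝ≥0∞) (A : Matrix (Fin p) (Fin p) ℝ) : ℝ :=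
  sSup {r : ℝ | ∃ x : Fin p → ℝ, vecLwNorm w x = 1 ∧ r = vecLwNorm w (A.mulVec x)}

/-- The spectral norm (matrix `ℓ_2` operator norm). -/
def specNorm {p : ℕ} (A : Matrix (Fin p) (Fin p) ℝ) : ℝ := lwOpNorm 2 A

/-- The Hamming distance on `{0,1}^r`. -/
def hamming {r : ℕ} (a b : Fin r → Bool) : ℕ :=
  (Finset.univ.filter fun i => a i ≠ b i).card

def boolToReal (b : Bool) : ℝ := if b then 1 else 0

/-- The 0/1 row vector in `ℝ^p` associated with `b ∈ {0,1}^p`. -/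
def rowOf {p : ℕ} (b : Fin p → Bool) : Fin p → ℝ := fun j => boolToReal (b j)

/-- `b ∈ B`: the first `p - r` coordinates vanish (`r = ⌊p/2⌋`) and exactly `k` of the last
`r` coordinates equal `1`. -/
def MemB (p k : ℕ) (b : Fin p → Bool) : Prop :=
  (∀ j : Fin p, (j : ℕ) < p - p / 2 → b j = false) ∧
    (Finset.univ.filter fun j => b j = true).card = k

/-- `λ ∈ Λ ⊆ B^r`: every row belongs to `B` and every column sum is at most `2k`. -/
def MemLam (p k : ℕ) (lam : Fin (p / 2) → Fin p → Bool) : Prop :=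
  (∀ m, MemB p k (lam m)) ∧
    ∀ j : Fin p, (Finset.univ.filter fun m => lam m j = true).card ≤ 2 * k

/-- The symmetric matrix `A_m(λ_m)` whose `m`-th row is `λ_m`, `m`-th column is `λ_mᵀ`, and
which vanishes elsewhere. -/
def Amat {p : ℕ} (m : Fin p) (lam : Fin p → ℝ) : Matrix (Fin p) (Fin p) ℝ :=
  Matrix.of fun i j => if i = m then lam j else if j = m then lam i else 0

/-- The covariance matrix `Σ(θ) = I_p + ε Σ_{m=1}^r γ_m A_m(λ_m)` of the lower-bound
construction. -/
def SigmaTheta (p : ℕ) (ε : ℝ) (θ : (Fin (p / 2) → Bool) × (Fin (p / 2) → Fin p → Bool)) :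
    Matrix (Fin p) (Fin p) ℝ :=
  1 + ε • ∑ m : Fin (p / 2),
      boolToReal (θ.1 m) • Amat (Fin.castLE (Nat.div_le_self p 2) m) (rowOf (θ.2 m))

/- ---- helpers ---- -/

lemma vecL2_eq {p : ℕ} (x : Fin p → ℝ) :
    vecLwNorm 2 x = Real.sqrt (∑ i, x i ^ 2) := by
  have h2 : ((2:ℝ≥0∞)).toReal = 2 := by norm_num
  simp only [vecLwNorm, if_neg (by norm_num : (2:ℝ≥0∞) ≠ ∞), h2]
  rw [Real.sqrt_eq_rpow]
  congr 1
  refine Finset.sum_congr rfl fun i _ => ?_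
  rw [show (2:ℝ) = ((2:ℕ):ℝ) by norm_num, Real.rpow_natCast, sq_abs]

lemma mulVec_L2_le {p : ℕ} (A : Matrix (Fin p) (Fin p) ℝ) (x : Fin p → ℝ) :
    vecLwNorm 2 (A.mulVec x) ≤ Real.sqrt (∑ i, ∑ j, A i j ^ 2) * vecLwNorm 2 x := by
  rw [vecL2_eq, vecL2_eq, ← Real.sqrt_mul (by positivity)]
  apply Real.sqrt_le_sqrt
  rw [Finset.sum_mul]
  refine Finset.sum_le_sum fun i _ => ?_
  calc (A.mulVec x i)^2 = (∑ j, A i j * x j)^2 := by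
        simp [Matrix.mulVec, dotProduct]
  _ ≤ (∑ j, A i j ^2) * ∑ j, x j ^2 := Finset.sum_mul_sq_le_sq_mul_sq _ _ _

lemma le_specNorm {p : ℕ} (A : Matrix (Fin p) (Fin p) ℝ) (x : Fin p → ℝ)
    (hx : vecLwNorm 2 x = 1) : vecLwNorm 2 (A.mulVec x) ≤ specNorm A := by
  apply le_csSup
  · refine ⟨Real.sqrt (∑ i, ∑ j, A i j ^ 2), ?_⟩
    rintro r ⟨y, hy, rfl⟩
    calc vecLwNorm 2 (A.mulVec y) ≤ _ * vecLwNorm 2 y := mulVec_L2_le A y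
    _ = _ := by rw [hy, mul_one]
  · exact ⟨x, hx, rfl⟩

lemma sum_transfer {p : ℕ} (f : Fin p → ℝ)
    (hf : ∀ j : Fin p, ¬((j:ℕ) < p / 2) → f j = 0) :
    ∑ j, f j = ∑ m : Fin (p/2), f (Fin.castLE (Nat.div_le_self p 2) m) := by
  classical
  have h1 : ∑ j ∈ Finset.univ.map ⟨Fin.castLE (Nat.div_le_self p 2),
      Fin.castLE_injective _⟩, f j = ∑ j, f j := by
    refine Finset.sum_subset (Finset.subset_univ _) ?_
    intro j _ hj
    refine hf j fun hlt => hj ?_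
    exact Finset.mem_map.mpr ⟨⟨(j:ℕ), hlt⟩, Finset.mem_univ _, Fin.ext rfl⟩
  rw [← h1, Finset.sum_map]
  rfl

lemma rowOf_sum {p k : ℕ} (b : Fin p → Bool) (hb : MemB p k b) :
    ∑ j, rowOf b j = (k : ℝ) := by
  have : ∑ j, rowOf b j = ((Finset.univ.filter fun j => b j = true).card : ℝ) := by
    rw [← Finset.sum_boole]
    refine Finset.sum_congr rfl fun j _ => ?_
    simp [rowOf, boolToReal]
  rw [this, hb.2]

lemma rowOf_nonneg {p : ℕ} (b : Fin p → Bool) (j : Fin p) : 0 ≤ rowOf b j := by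
  simp only [rowOf, boolToReal]; split <;> norm_num

/-- **Lemma 5 of Cai–Zhou (per-comparison loss bound).**  In the lower-bound construction,
for any `θ, θ' ∈ Θ` with `H(γ(θ), γ(θ')) ≥ 1`,
`|||Σ(θ) - Σ(θ')|||² / H(γ(θ), γ(θ')) ≥ (k ε_{n,p})² / p`; hence
`α = min_{H ≥ 1} |||Σ(θ) - Σ(θ')|||²/H ≥ (k ε_{n,p})²/p`. -/
theorem per_comparison_loss_bound (p k : ℕ) (hp : 2 ≤ p) (hk : 1 ≤ k) (hkr : k ≤ p / 2)
    (ε : ℝ) (hε : 0 < ε)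
    (θ θ' : (Fin (p / 2) → Bool) × (Fin (p / 2) → Fin p → Bool))
    (hθ : MemLam p k θ.2) (hθ' : MemLam p k θ'.2)
    (hH : 1 ≤ hamming θ.1 θ'.1) :
    ((k : ℝ) * ε) ^ 2 / p ≤
      specNorm (SigmaTheta p ε θ - SigmaTheta p ε θ') ^ 2 / hamming θ.1 θ'.1 := by
  classical
  set e : Fin (p/2) → Fin p := Fin.castLE (Nat.div_le_self p 2) with he
  have he_inj : Function.Injective e := Fin.castLE_injective _
  have hle2 : p / 2 ≤ p - p / 2 := by omega
  set H : ℕ := hamming θ.1 θ'.1 with hHdef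
  have hHpos : (0:ℝ) < H := by exact_mod_cast hH
  set s : ℝ := Real.sqrt H with hs
  have hspos : 0 < s := Real.sqrt_pos.mpr hHpos
  have hs2 : s ^ 2 = H := Real.sq_sqrt hHpos.le
  set sgn : Fin (p/2) → ℝ := fun m => boolToReal (θ.1 m) - boolToReal (θ'.1 m) with hsgn
  set x : Fin p → ℝ :=
    fun j => if h : (j:ℕ) < p / 2 then sgn ⟨(j:ℕ), h⟩ / s else 0 with hx
  set D := SigmaTheta p ε θ - SigmaTheta p ε θ' with hD
  -- x vanishes off the first p/2 coordinates, and on them is sgn/s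
  have hx_off : ∀ j : Fin p, ¬((j:ℕ) < p / 2) → x j = 0 := fun j hj => dif_neg hj
  have hx_at : ∀ m : Fin (p/2), x (e m) = sgn m / s := fun m =>
    dif_pos (show ((e m : Fin p) : ℕ) < p / 2 from m.isLt)
  -- sgn squared
  have hsgn_sq : ∀ m, sgn m ^ 2 = if θ.1 m ≠ θ'.1 m then (1:ℝ) else 0 := by
    intro m
    rcases Bool.eq_false_or_eq_true (θ.1 m) with h1 | h1 <;>
      rcases Bool.eq_false_or_eq_true (θ'.1 m) with h2 | h2 <;>
      simp [hsgn, boolToReal, h1, h2]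
  have hsum_sgn : ∑ m, sgn m ^ 2 = (H : ℝ) := by
    rw [Finset.sum_congr rfl fun m _ => hsgn_sq m, ← Finset.sum_filter,
      Finset.sum_const, nsmul_eq_mul, mul_one]
    rfl
  -- x is a unit vector
  have hx_norm : vecLwNorm 2 x = 1 := by
    rw [vecL2_eq]
    have : ∑ j, x j ^ 2 = 1 := by
      rw [sum_transfer (fun j => x j ^ 2) (fun j hj => by rw [hx_off j hj]; ring)]
      have : ∀ m : Fin (p/2), x (e m) ^ 2 = sgn m ^ 2 / H := by
        intro m
        rw [hx_at m, div_pow, hs2]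
      rw [Finset.sum_congr rfl fun m _ => this m, ← Finset.sum_div, hsum_sgn,
        div_self hHpos.ne']
    rw [this, Real.sqrt_one]
  -- entries of D
  have hDapply : ∀ i j : Fin p, D i j =
      ε * ∑ m', (boolToReal (θ.1 m') * Amat (e m') (rowOf (θ.2 m')) i j
        - boolToReal (θ'.1 m') * Amat (e m') (rowOf (θ'.2 m')) i j) := by
    intro i j
    rw [hD]
    simp only [SigmaTheta, Matrix.sub_apply, Matrix.add_apply, Matrix.smul_apply,
      Matrix.sum_apply, smul_eq_mul, ← he]
    rw [Finset.sum_sub_distrib]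
    ring
  -- column values of Amat
  have hAcol : ∀ (b : Fin p → Bool), MemB p k b → ∀ (j : Fin p) (m m' : Fin (p/2)),
      Amat (e m') (rowOf b) j (e m) = if m' = m then rowOf b j else 0 := by
    intro b hb j m m'
    have hbz : ∀ m₀ : Fin (p/2), rowOf b (e m₀) = 0 := by
      intro m₀
      have : b (e m₀) = false := hb.1 _ (lt_of_lt_of_le m₀.isLt hle2)
      simp [rowOf, this, boolToReal]
    show (if j = e m' then rowOf b (e m) else if e m = e m' then rowOf b j else 0)
      = if m' = m then rowOf b j else 0
    by_cases hmm : m' = m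
    · subst hmm
      by_cases hj : j = e m'
      · simp [hj, hbz]
      · simp [hj, hbz]
    · have hee : e m ≠ e m' := fun hc => hmm (he_inj hc).symm
      by_cases hj : j = e m'
      · simp [hj, hbz, hmm]
      · simp [hj, hee, hmm]
  -- D at column e m
  have hDcol : ∀ (j : Fin p) (m : Fin (p/2)), D j (e m) =
      ε * (boolToReal (θ.1 m) * rowOf (θ.2 m) j - boolToReal (θ'.1 m) * rowOf (θ'.2 m) j) := by
    intro j m
    rw [hDapply]
    congr 1
    rw [Finset.sum_eq_single m]
    · rw [hAcol _ (hθ.1 m) j m m, hAcol _ (hθ'.1 m) j m m, if_pos rfl, if_pos rfl]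
    · intro m' _ hm'
      rw [hAcol _ (hθ.1 m') j m m', hAcol _ (hθ'.1 m') j m m', if_neg hm', if_neg hm']
      ring
    · intro h; exact absurd (Finset.mem_univ m) h
  -- the nonnegative profile g
  set g : Fin (p/2) → Fin p → ℝ := fun m j =>
    if θ.1 m = θ'.1 m then 0 else if θ.1 m then rowOf (θ.2 m) j else rowOf (θ'.2 m) j
    with hg
  have hg_eq : ∀ m j, sgn m * (boolToReal (θ.1 m) * rowOf (θ.2 m) j
      - boolToReal (θ'.1 m) * rowOf (θ'.2 m) j) = g m j := by
    intro m j
    rcases Bool.eq_false_or_eq_true (θ.1 m) with h1 | h1 <;>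
      rcases Bool.eq_false_or_eq_true (θ'.1 m) with h2 | h2 <;>
      simp [hsgn, hg, boolToReal, h1, h2] <;> ring
  have hg_nonneg : ∀ m j, 0 ≤ g m j := by
    intro m j
    rw [hg]
    dsimp only
    split
    · exact le_rfl
    · split <;> exact rowOf_nonneg _ _
  have hg_rowsum : ∀ m, ∑ j, g m j = if θ.1 m = θ'.1 m then 0 else (k:ℝ) := by
    intro m
    by_cases hmm : θ.1 m = θ'.1 m
    · simp [hg, hmm]
    · rw [if_neg hmm]
      by_cases h1 : θ.1 m = true
      · have h2 : θ'.1 m = false := by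
          cases h2 : θ'.1 m
          · rfl
          · exact absurd (h1.trans h2.symm) hmm
        have hgj : ∀ j, g m j = rowOf (θ.2 m) j := fun j => by simp [hg, h1, h2]
        rw [Finset.sum_congr rfl fun j _ => hgj j]
        exact rowOf_sum _ (hθ.1 m)
      · rw [Bool.not_eq_true] at h1
        have h2 : θ'.1 m = true := by
          cases h2 : θ'.1 m
          · exact absurd (h1.trans h2.symm) hmm
          · rfl
        have hgj : ∀ j, g m j = rowOf (θ'.2 m) j := fun j => by simp [hg, h1, h2]
        rw [Finset.sum_congr rfl fun j _ => hgj j]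
        exact rowOf_sum _ (hθ'.1 m)
  -- D.mulVec x
  have hDx : ∀ j : Fin p, D.mulVec x j = ε / s * ∑ m, g m j := by
    intro j
    have : D.mulVec x j = ∑ i, D j i * x i := by
      simp [Matrix.mulVec, dotProduct]
    rw [this, sum_transfer (fun i => D j i * x i)
      (fun i hi => by rw [hx_off i hi]; ring)]
    rw [Finset.mul_sum]
    refine Finset.sum_congr rfl fun m _ => ?_
    rw [hDcol j m, hx_at m, ← hg_eq m j]
    field_simp
  have hDx_nonneg : ∀ j, 0 ≤ D.mulVec x j := by
    intro j
    rw [hDx j]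
    exact mul_nonneg (by positivity) (Finset.sum_nonneg fun m _ => hg_nonneg m j)
  -- total sum of D.mulVec x
  have hc : ∑ j, D.mulVec x j = ε / s * ((H : ℝ) * k) := by
    rw [Finset.sum_congr rfl fun j _ => hDx j, ← Finset.mul_sum]
    congr 1
    rw [Finset.sum_comm]
    rw [Finset.sum_congr rfl fun m _ => hg_rowsum m]
    have : ∀ m : Fin (p/2), (if θ.1 m = θ'.1 m then (0:ℝ) else (k:ℝ))
        = if θ.1 m ≠ θ'.1 m then (k:ℝ) else 0 := by
      intro m; by_cases hmm : θ.1 m = θ'.1 m <;> simp [hmm]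
    rw [Finset.sum_congr rfl fun m _ => this m, ← Finset.sum_filter,
      Finset.sum_const, nsmul_eq_mul]
    rfl
  -- Cauchy–Schwarz lower bound on the ℓ2 norm
  have hcs : (∑ j, D.mulVec x j) ^ 2 ≤ (p : ℝ) * ∑ j, D.mulVec x j ^ 2 := by
    have h := Finset.sum_mul_sq_le_sq_mul_sq Finset.univ (fun _ : Fin p => (1:ℝ))
      (fun j => D.mulVec x j)
    simpa using h
  have hppos : (0:ℝ) < p := by positivity
  have hnorm_ge : Real.sqrt ((∑ j, D.mulVec x j)^2 / p) ≤ vecLwNorm 2 (D.mulVec x) := by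
    rw [vecL2_eq]
    apply Real.sqrt_le_sqrt
    rw [div_le_iff₀ hppos] at *
    nlinarith [hcs]
  have hspec : Real.sqrt ((∑ j, D.mulVec x j)^2 / p) ≤ specNorm D :=
    le_trans hnorm_ge (le_specNorm D x hx_norm)
  have hspec_nonneg : 0 ≤ specNorm D := le_trans (Real.sqrt_nonneg _) hspec
  have hsq : (∑ j, D.mulVec x j)^2 / p ≤ specNorm D ^ 2 := by
    have := pow_le_pow_left₀ (Real.sqrt_nonneg _) hspec 2
    rwa [Real.sq_sqrt (by positivity)] at this
  have hc2 : (∑ j, D.mulVec x j)^2 = ε^2 * k^2 * H := by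
    rw [hc]
    field_simp
    nlinarith [hs2, hspos]
  rw [hc2, div_le_iff₀ hppos] at hsq
  rw [div_le_div_iff₀ hppos hHpos]
  calc ((k:ℝ) * ε)^2 * H = ε^2 * (k:ℝ)^2 * H := by ring
  _ ≤ specNorm D ^ 2 * p := hsq

end
end

section
/- Let P_1, …, P_m and Q_1, …, Q_m be probability measures on a common measurable space with Q_i absolutely continuous with respect to P_i for each i, and let w_1, …, w_m ≥ 0 with Σ_i w_i = 1. If Σ_{i=1}^m w_i [ ∫ (dQ_i/dP_i)^2 dP_i − 1 ] ≤ c^2 for some 0 < c < 1, then the mixtures P̄ = Σ_i w_i P_i and Q̄ = Σ_i w_i Q_i satisfy ‖P̄ ∧ Q̄‖ ≥ 1 − c. -/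
open MeasureTheory
open scoped ENNReal NNReal BigOperators

noncomputable section

lemma lint_le_sqrt {Ω : Type*} [MeasurableSpace Ω] (μ : Measure Ω) [IsProbabilityMeasure μ]
    {g : Ω → ℝ≥0∞} (hg : AEMeasurable g μ) :
    ∫⁻ x, g x ∂μ ≤ (∫⁻ x, g x ^ 2 ∂μ) ^ (1/2 : ℝ) := by
  have hconj : Real.HolderConjugate 2 2 := Real.HolderConjugate.two_two
  have h := ENNReal.lintegral_mul_le_Lp_mul_Lq μ hconj hg (aemeasurable_const (b := (1:ℝ≥0∞)))
  simp only [Pi.mul_apply, mul_one, ENNReal.one_rpow, lintegral_const, one_mul,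
    measure_univ, mul_one] at h
  calc ∫⁻ x, g x ∂μ ≤ (∫⁻ x, g x ^ (2:ℝ) ∂μ) ^ (1/2 : ℝ) := h
    _ = (∫⁻ x, g x ^ 2 ∂μ) ^ (1/2 : ℝ) := by
        congr 1; refine lintegral_congr fun x => ?_
        rw [← ENNReal.rpow_natCast (g x) 2]; norm_num

lemma ptwise (a : ℝ≥0∞) : (a - 1) ^ 2 + 2 * a ≤ a ^ 2 + 1 := by
  rcases eq_or_ne a ∞ with rfl | ha
  · simp
  · lift a to ℝ≥0 using ha
    rw [← ENNReal.coe_one, ← ENNReal.coe_sub]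
    norm_cast
    rcases le_total a 1 with h | h
    · rw [tsub_eq_zero_of_le h, ← NNReal.coe_le_coe]
      push_cast
      nlinarith [sq_nonneg ((a:ℝ) - 1)]
    · rw [← NNReal.coe_le_coe]
      push_cast [NNReal.coe_sub h]
      nlinarith

lemma sum_cs {m : ℕ} (w E : Fin m → ℝ≥0∞) :
    ∑ i, w i * E i ^ (1/2 : ℝ) ≤ (∑ i, w i) ^ (1/2:ℝ) * (∑ i, w i * E i) ^ (1/2:ℝ) := by
  have hconj : Real.HolderConjugate 2 2 := Real.HolderConjugate.two_two
  have h := ENNReal.lintegral_mul_le_Lp_mul_Lq (Measure.count : Measure (Fin m)) hconj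
    (f := fun i => w i ^ (1/2:ℝ)) (g := fun i => (w i * E i) ^ (1/2:ℝ))
    (measurable_of_countable _).aemeasurable (measurable_of_countable _).aemeasurable
  simp only [Pi.mul_apply, MeasureTheory.lintegral_count, tsum_fintype] at h
  have e1 : ∀ x : ℝ≥0∞, (x ^ (1/2:ℝ)) ^ (2:ℝ) = x := by
    intro x; rw [← ENNReal.rpow_mul]; norm_num
  calc ∑ i, w i * E i ^ (1/2:ℝ)
      = ∑ i, (w i ^ (1/2:ℝ)) * ((w i * E i) ^ (1/2:ℝ)) := by
        refine Finset.sum_congr rfl fun i _ => ?_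
        rw [ENNReal.mul_rpow_of_nonneg _ _ (by norm_num : (0:ℝ) ≤ 1/2), ← mul_assoc]
        congr 1
        rw [← ENNReal.rpow_add_of_nonneg _ _ (by norm_num) (by norm_num)]
        norm_num
    _ ≤ (∑ i, (w i ^ (1/2:ℝ)) ^ (2:ℝ)) ^ (1/2:ℝ) * (∑ i, ((w i * E i) ^ (1/2:ℝ)) ^ (2:ℝ)) ^ (1/2:ℝ) := h
    _ = (∑ i, w i) ^ (1/2:ℝ) * (∑ i, w i * E i) ^ (1/2:ℝ) := by simp only [e1]

/-- **Chi-squared bound for the affinity of mixtures (Lemma 7(ii) of Cai–Zhou, in mixture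
form).**  If `Q_i ≪ P_i` and the average chi-squared divergence satisfies
`Σ_i w_i [∫ (dQ_i/dP_i)² dP_i - 1] ≤ c²` (equivalently
`Σ_i w_i ∫ (dQ_i/dP_i)² dP_i ≤ 1 + c²`) for some `0 < c < 1`, then
`‖Σ_i w_i P_i ∧ Σ_i w_i Q_i‖ ≥ 1 - c`. -/
theorem affinity_ge_of_chi_squared {Ω : Type*} [MeasurableSpace Ω] (m : ℕ)
    (P Q : Fin m → Measure Ω)
    (hP : ∀ i, IsProbabilityMeasure (P i)) (hQ : ∀ i, IsProbabilityMeasure (Q i))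
    (hac : ∀ i, Q i ≪ P i)
    (w : Fin m → ℝ≥0) (hw : ∑ i, w i = 1)
    (c : ℝ) (hc0 : 0 < c) (hc1 : c < 1)
    (hchi : ∑ i, (w i : ℝ≥0∞) * ∫⁻ x, ((Q i).rnDeriv (P i) x) ^ 2 ∂(P i) ≤
      ENNReal.ofReal (1 + c ^ 2)) :
    1 - c ≤ affinity (∑ i, (w i : ℝ≥0∞) • P i) (∑ i, (w i : ℝ≥0∞) • Q i) := by
  set f : Fin m → Ω → ℝ≥0∞ := fun i => (Q i).rnDeriv (P i) with hf
  set B : Fin m → ℝ≥0∞ := fun i => ∫⁻ x, f i x ^ 2 ∂(P i) with hBdef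
  set D : Fin m → ℝ≥0∞ := fun i => ∫⁻ x, (f i x - 1) ∂(P i) with hDdef
  set Pbar := ∑ i, (w i : ℝ≥0∞) • P i with hPbar
  set Qbar := ∑ i, (w i : ℝ≥0∞) • Q i with hQbar
  have hwsum : ∑ i, (w i : ℝ≥0∞) = 1 := by
    rw [← ENNReal.coe_finset_sum, hw, ENNReal.coe_one]
  have hfmeas : ∀ i, Measurable (f i) := fun i => Measure.measurable_rnDeriv _ _
  have hf1 : ∀ i, ∫⁻ x, f i x ∂(P i) = 1 := by
    intro i
    haveI := hP i; haveI := hQ i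
    rw [hf, Measure.lintegral_rnDeriv (hac i)]
    exact measure_univ
  -- B i ≥ 1
  have hB1 : ∀ i, 1 ≤ B i := by
    intro i
    haveI := hP i; haveI := hQ i
    have h1 : (1:ℝ≥0∞) ≤ B i ^ (1/2:ℝ) := by
      rw [← hf1 i]; exact lint_le_sqrt _ (hfmeas i).aemeasurable
    have h2 := ENNReal.rpow_le_rpow h1 (by norm_num : (0:ℝ) ≤ 2)
    rwa [ENNReal.one_rpow, ← ENNReal.rpow_mul, one_div, inv_mul_cancel₀ (two_ne_zero), ENNReal.rpow_one] at h2
  -- D i ≤ (B i - 1) ^ (1/2)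
  have hD : ∀ i, D i ≤ (B i - 1) ^ (1/2:ℝ) := by
    intro i
    haveI := hP i; haveI := hQ i
    have hmeas1 : Measurable fun x => (f i x - 1) := (hfmeas i).sub measurable_const
    have hA : ∫⁻ x, (f i x - 1) ^ 2 ∂(P i) ≤ B i - 1 := by
      have hmono : ∫⁻ x, ((f i x - 1) ^ 2 + 2 * f i x) ∂(P i)
          ≤ ∫⁻ x, (f i x ^ 2 + 1) ∂(P i) := lintegral_mono fun x => ptwise (f i x)
      rw [lintegral_add_left (hmeas1.pow_const 2), lintegral_add_right _ measurable_const,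
        lintegral_const_mul _ (hfmeas i), hf1 i, mul_one, lintegral_one, measure_univ] at hmono
      refine ENNReal.le_sub_of_add_le_right ENNReal.one_ne_top ?_
      have : ∫⁻ x, (f i x - 1) ^ 2 ∂(P i) + 1 + 1 ≤ B i + 1 := by
        calc ∫⁻ x, (f i x - 1) ^ 2 ∂(P i) + 1 + 1
            = ∫⁻ x, (f i x - 1) ^ 2 ∂(P i) + 2 := by ring
          _ ≤ B i + 1 := hmono
      exact (ENNReal.add_le_add_iff_right ENNReal.one_ne_top).mp this
    calc D i ≤ (∫⁻ x, (f i x - 1) ^ 2 ∂(P i)) ^ (1/2:ℝ) := lint_le_sqrt _ hmeas1.aemeasurable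
      _ ≤ (B i - 1) ^ (1/2:ℝ) := ENNReal.rpow_le_rpow hA (by norm_num)
  -- ∑ w (B - 1) ≤ ofReal (c^2)
  have hkey : ∑ i, (w i : ℝ≥0∞) * (B i - 1) ≤ ENNReal.ofReal (c ^ 2) := by
    have hsplit : ∀ i, (w i : ℝ≥0∞) * (B i - 1) + w i = w i * B i := by
      intro i
      have h0 : (w i : ℝ≥0∞) * (B i - 1) + w i * 1 = w i * B i := by
        rw [← mul_add, tsub_add_cancel_of_le (hB1 i)]
      simpa using h0
    have h1 : ∑ i, (w i : ℝ≥0∞) * (B i - 1) + 1 ≤ ENNReal.ofReal (c ^ 2) + 1 := by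
      calc ∑ i, (w i : ℝ≥0∞) * (B i - 1) + 1
          = ∑ i, ((w i : ℝ≥0∞) * (B i - 1) + w i) := by
            rw [Finset.sum_add_distrib, hwsum]
        _ = ∑ i, (w i : ℝ≥0∞) * B i := Finset.sum_congr rfl fun i _ => hsplit i
        _ ≤ ENNReal.ofReal (1 + c ^ 2) := hchi
        _ = ENNReal.ofReal (c ^ 2) + 1 := by
            rw [ENNReal.ofReal_add (by norm_num) (sq_nonneg c), ENNReal.ofReal_one, add_comm]
    exact (ENNReal.add_le_add_iff_right ENNReal.one_ne_top).mp h1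
  -- ∑ w D ≤ ofReal c
  have hT : ∑ i, (w i : ℝ≥0∞) * D i ≤ ENNReal.ofReal c := by
    calc ∑ i, (w i : ℝ≥0∞) * D i
        ≤ ∑ i, (w i : ℝ≥0∞) * (B i - 1) ^ (1/2:ℝ) :=
          Finset.sum_le_sum fun i _ => mul_le_mul_right (hD i) _
      _ ≤ (∑ i, (w i : ℝ≥0∞)) ^ (1/2:ℝ) * (∑ i, (w i : ℝ≥0∞) * (B i - 1)) ^ (1/2:ℝ) :=
          sum_cs _ _
      _ ≤ 1 * (ENNReal.ofReal (c ^ 2)) ^ (1/2:ℝ) := by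
          rw [hwsum, ENNReal.one_rpow]
          exact mul_le_mul_right (ENNReal.rpow_le_rpow hkey (by norm_num)) _
      _ = ENNReal.ofReal c := by
          rw [one_mul, ENNReal.ofReal_rpow_of_nonneg (sq_nonneg c) (by norm_num : (0:ℝ) ≤ 1/2)]
          congr 1
          rw [← Real.rpow_natCast c 2, ← Real.rpow_mul hc0.le]
          norm_num
  -- per measurable set bound
  have hset : ∀ s : Set Ω, MeasurableSet s →
      ENNReal.ofReal (1 - c) ≤ Pbar s + Qbar sᶜ := by
    intro s hs
    have happly : ∀ (μ : Fin m → Measure Ω) (t : Set Ω),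
        (∑ i, (w i : ℝ≥0∞) • μ i) t = ∑ i, (w i : ℝ≥0∞) * μ i t := by
      intro μ t
      simp [Measure.coe_finset_sum, Finset.sum_apply, Measure.smul_apply, smul_eq_mul]
    have hi : ∀ i, 1 - D i ≤ P i s + Q i sᶜ := by
      intro i
      haveI := hP i; haveI := hQ i
      have hQs : Q i s ≤ D i + P i s := by
        rw [← Measure.setLIntegral_rnDeriv' (hac i) hs]
        calc ∫⁻ x in s, f i x ∂(P i)
            ≤ ∫⁻ x in s, ((f i x - 1) + 1) ∂(P i) := lintegral_mono fun x => le_tsub_add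
          _ = ∫⁻ x in s, (f i x - 1) ∂(P i) + P i s := by
              rw [lintegral_add_right _ measurable_const, setLIntegral_one]
          _ ≤ D i + P i s := add_le_add_left (setLIntegral_le_lintegral _ _) _
      have h1 : (1:ℝ≥0∞) ≤ D i + (P i s + Q i sᶜ) := by
        calc (1:ℝ≥0∞) = (Q i) Set.univ := measure_univ.symm
          _ = Q i s + Q i sᶜ := (measure_add_measure_compl hs).symm
          _ ≤ (D i + P i s) + Q i sᶜ := add_le_add_left hQs _
          _ = D i + (P i s + Q i sᶜ) := by ring
      exact tsub_le_iff_left.mpr h1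
    have hi' : ∀ i, (w i : ℝ≥0∞) - w i * D i ≤ w i * (P i s + Q i sᶜ) := by
      intro i
      refine tsub_le_iff_right.mpr ?_
      calc (w i : ℝ≥0∞) = w i * 1 := (mul_one _).symm
        _ ≤ w i * ((1 - D i) + D i) := mul_le_mul_right le_tsub_add _
        _ = w i * (1 - D i) + w i * D i := by rw [mul_add]
        _ ≤ w i * (P i s + Q i sᶜ) + w i * D i :=
            add_le_add_left (mul_le_mul_right (hi i) _) _
    calc ENNReal.ofReal (1 - c) = 1 - ENNReal.ofReal c := by
          rw [ENNReal.ofReal_sub _ hc0.le, ENNReal.ofReal_one]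
      _ ≤ 1 - ∑ i, (w i : ℝ≥0∞) * D i := tsub_le_tsub_left hT 1
      _ ≤ ∑ i, ((w i : ℝ≥0∞) - w i * D i) := by
          rw [← hwsum]
          refine tsub_le_iff_right.mpr ?_
          rw [← Finset.sum_add_distrib]
          exact Finset.sum_le_sum fun i _ => le_tsub_add
      _ ≤ ∑ i, (w i : ℝ≥0∞) * (P i s + Q i sᶜ) := Finset.sum_le_sum fun i _ => hi' i
      _ = Pbar s + Qbar sᶜ := by
          rw [happly P s, happly Q sᶜ, ← Finset.sum_add_distrib]
          exact Finset.sum_congr rfl fun i _ => (mul_add _ _ _)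
  have hlow : ENNReal.ofReal (1 - c) ≤ (Pbar ⊓ Qbar) Set.univ := by
    rw [Measure.inf_apply MeasurableSet.univ]
    refine le_sInf ?_
    rintro x ⟨t, rfl⟩
    simp only [Set.inter_univ]
    set s := toMeasurable Pbar t with hsdef
    calc ENNReal.ofReal (1 - c) ≤ Pbar s + Qbar sᶜ :=
          hset s (measurableSet_toMeasurable _ _)
      _ ≤ Pbar t + Qbar tᶜ := by
          rw [hsdef, measure_toMeasurable t]
          exact add_le_add_right
            (measure_mono (Set.compl_subset_compl.mpr (subset_toMeasurable _ t))) _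
  have hfin : (Pbar ⊓ Qbar) Set.univ ≠ ∞ := by
    have h1 : (Pbar ⊓ Qbar) Set.univ ≤ Pbar Set.univ := Measure.le_iff'.1 inf_le_left _
    have h2 : Pbar Set.univ = 1 := by
      simp only [hPbar, Measure.coe_finset_sum, Finset.sum_apply, Measure.smul_apply,
        smul_eq_mul]
      have : ∀ i, (w i : ℝ≥0∞) * P i Set.univ = w i := by
        intro i; haveI := hP i; rw [measure_univ, mul_one]
      rw [Finset.sum_congr rfl fun i _ => this i, hwsum]
    exact ne_top_of_le_ne_top (by rw [h2]; exact ENNReal.one_ne_top) h1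
  have := ENNReal.toReal_mono hfin hlow
  rwa [ENNReal.toReal_ofReal (by linarith)] at this


end
end

section
/- Let p ≥ 2, ε > 0, and let r, r' ∈ ℝ^p be vectors whose first coordinates are zero, each having exactly k nonzero entries all equal to ε, and whose supports overlap in exactly J positions. Let Δ_1 = e_1 r^T + r e_1^T and Δ_2 = e_1 r'^T + r' e_1^T, where e_1 is the first standard basis vector; thus Δ_i has nonzero entries only in its first row and first column. Then Q = Δ_1 Δ_2 satisfies: q_{11} = J ε^2; q_{ij} = ε^2 for i in the support of r and j in the support of r'; and q_{ij} = 0 otherwise. Moreover, if J > 0 then Δ_1 Δ_2 has rank 2, and its two nonzero eigenvalues are both equal to J ε^2. -/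
open scoped BigOperators Polynomial

open Matrix Polynomial

set_option maxHeartbeats 1000000
set_option synthInstance.maxHeartbeats 200000

noncomputable section

lemma aux_map_vecMulVec {R S : Type*} [CommRing R] [CommRing S] (f : R →+* S)
    {n m : Type*} (u : n → R) (v : m → R) :
    (Matrix.vecMulVec u v).map f = Matrix.vecMulVec (f ∘ u) (f ∘ v) := by
  ext i j; simp [Matrix.vecMulVec_apply]

lemma aux_det_smul_one_sub_vecMulVec {K : Type*} [Field K] {n : Type*} [Fintype n] [DecidableEq n]
    (t : K) (ht : t ≠ 0) (u v : n → K) :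
    (t • (1 : Matrix n n K) - Matrix.vecMulVec u v).det
      = t ^ Fintype.card n * (1 - t⁻¹ * (v ⬝ᵥ u)) := by
  have h : t • (1 : Matrix n n K) - Matrix.vecMulVec u v
      = t • ((1 : Matrix n n K) + Matrix.replicateCol Unit (-(t⁻¹ • u)) * Matrix.replicateRow Unit v) := by
    rw [smul_add, ← Matrix.vecMulVec_eq Unit]
    ext i j
    by_cases hij : i = j <;>
      simp [Matrix.vecMulVec_apply, Matrix.one_apply, hij, smul_sub] <;> field_simp <;> ring
  rw [h, Matrix.det_smul, Matrix.det_one_add_replicateCol_mul_replicateRow]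
  congr 1
  rw [dotProduct_neg, dotProduct_smul]
  simp [smul_eq_mul]
  ring

lemma aux_charpoly_vecMulVec {n : Type*} [Fintype n] [DecidableEq n] [Nonempty n]
    (u v : n → ℝ) :
    (Matrix.vecMulVec u v).charpoly
      = Polynomial.X ^ (Fintype.card n - 1) * (Polynomial.X - Polynomial.C (v ⬝ᵥ u)) := by
  have hφinj : Function.Injective (algebraMap (Polynomial ℝ) (RatFunc ℝ)) :=
    IsFractionRing.injective (Polynomial ℝ) (RatFunc ℝ)
  apply hφinj
  set φ : Polynomial ℝ →+* RatFunc ℝ := (algebraMap (Polynomial ℝ) (RatFunc ℝ)) with hφ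
  set ψ : ℝ →+* RatFunc ℝ := φ.comp Polynomial.C with hψ
  set t : RatFunc ℝ := φ Polynomial.X with htdef
  have ht : t ≠ 0 := by
    simp only [htdef]
    intro h
    exact Polynomial.X_ne_zero (hφinj (h.trans (map_zero φ).symm))
  have hmap : (Matrix.charmatrix (Matrix.vecMulVec u v)).map ⇑φ
      = t • (1 : Matrix n n (RatFunc ℝ)) - Matrix.vecMulVec (⇑ψ ∘ u) (⇑ψ ∘ v) := by
    ext i j
    by_cases hij : i = j <;>
      simp [Matrix.charmatrix_apply, Matrix.vecMulVec_apply, hij, Matrix.one_apply,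
        Matrix.diagonal_apply, hψ] <;> rfl
  have hdot : (⇑ψ ∘ v) ⬝ᵥ (⇑ψ ∘ u) = ψ (v ⬝ᵥ u) := by
    simp [dotProduct, map_sum]
  have h1 : φ (Matrix.vecMulVec u v).charpoly
      = t ^ Fintype.card n * (1 - t⁻¹ * ψ (v ⬝ᵥ u)) := by
    rw [Matrix.charpoly, RingHom.map_det]
    have : φ.mapMatrix (Matrix.charmatrix (Matrix.vecMulVec u v))
        = (Matrix.charmatrix (Matrix.vecMulVec u v)).map ⇑φ := rfl
    rw [this, hmap, aux_det_smul_one_sub_vecMulVec t ht, hdot]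
  rw [h1]
  rw [_root_.map_mul, map_pow, _root_.map_sub, ← htdef]
  have hcard : 1 ≤ Fintype.card n := Fintype.card_pos
  have hCψ : φ (Polynomial.C (v ⬝ᵥ u)) = ψ (v ⬝ᵥ u) := rfl
  rw [hCψ]
  have hpow : t ^ Fintype.card n = t ^ (Fintype.card n - 1) * t := by
    rw [← pow_succ]
    congr 1
    omega
  rw [hpow]
  field_simp



lemma aux_charmatrix_mul_of_mul_eq_zero {R : Type*} [CommRing R] {n : Type*} [Fintype n]
    [DecidableEq n] {A B : Matrix n n R} (h : A * B = 0) :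
    A.charmatrix * B.charmatrix = (Polynomial.X : Polynomial R) • (A + B).charmatrix := by
  have hs : ∀ M : Matrix n n (Polynomial R),
      Matrix.scalar n (Polynomial.X : Polynomial R) * M = (Polynomial.X : Polynomial R) • M := by
    intro M; ext i j; simp [Matrix.scalar_apply, Matrix.diagonal_mul]
  have hs' : ∀ M : Matrix n n (Polynomial R),
      M * Matrix.scalar n (Polynomial.X : Polynomial R) = (Polynomial.X : Polynomial R) • M := by
    intro M; ext i j; simp [Matrix.scalar_apply, Matrix.mul_diagonal, mul_comm]
  have h' : ((Polynomial.C : R →+* Polynomial R).mapMatrix A)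
      * ((Polynomial.C : R →+* Polynomial R).mapMatrix B) = 0 := by
    rw [← _root_.map_mul, h, map_zero]
  simp only [Matrix.charmatrix, map_add]
  rw [sub_mul, mul_sub, mul_sub, h', hs, hs, hs', sub_zero, smul_sub, smul_add]
  abel
/-- **Lemma (structure of the cross product, Lemma 7/`sigmai` of Cai–Zhou).**
Let `r, r' ∈ ℝ^p` be supported off the first coordinate, each with exactly `k` nonzero
entries equal to `ε`, with supports overlapping in exactly `J` positions, and let
`Δ_i = e₁ rᵀ + r e₁ᵀ` (resp. with `r'`).  Then `Q = Δ₁ Δ₂` has `q₁₁ = J ε²`,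
`q_{ij} = ε²` for `i` in the support of `r` and `j` in the support of `r'`, and `q_{ij} = 0`
otherwise; moreover if `J > 0` then `Q` has rank `2` and its two nonzero eigenvalues both
equal `J ε²` (its characteristic polynomial is `(X - J ε²)² X^{p-2}`). -/
theorem cross_product_structure (p : ℕ) (hp : 2 ≤ p) (ε : ℝ) (hε : 0 < ε) (k : ℕ)
    (S S' : Finset (Fin p)) (J : ℕ)
    (i0 : Fin p) (hi0 : (i0 : ℕ) = 0)
    (h0S : i0 ∉ S) (h0S' : i0 ∉ S')
    (hSk : S.card = k) (hS'k : S'.card = k) (hJ : (S ∩ S').card = J) :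
    let r : Fin p → ℝ := fun j => if j ∈ S then ε else 0
    let r' : Fin p → ℝ := fun j => if j ∈ S' then ε else 0
    let e1 : Fin p → ℝ := fun j => if j = i0 then 1 else 0
    let Q : Matrix (Fin p) (Fin p) ℝ :=
      (Matrix.vecMulVec e1 r + Matrix.vecMulVec r e1) *
        (Matrix.vecMulVec e1 r' + Matrix.vecMulVec r' e1)
    (Q i0 i0 = (J : ℝ) * ε ^ 2) ∧
      (∀ i ∈ S, ∀ j ∈ S', Q i j = ε ^ 2) ∧
      (∀ i j : Fin p, ¬(i = i0 ∧ j = i0) → (i ∉ S ∨ j ∉ S') → Q i j = 0) ∧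
      (0 < J →
        Q.rank = 2 ∧
          Q.charpoly =
            (Polynomial.X - Polynomial.C ((J : ℝ) * ε ^ 2)) ^ 2 * Polynomial.X ^ (p - 2)) := by
  intro r r' e1 Q
  set c : ℝ := (J : ℝ) * ε ^ 2 with hc
  -- basic facts
  have hri0 : r i0 = 0 := by simp [r, h0S]
  have hr'i0 : r' i0 = 0 := by simp [r', h0S']
  have he1i0 : e1 i0 = 1 := by simp [e1]
  -- single sums
  have hsingle : ∀ f : Fin p → ℝ, (∑ x : Fin p, e1 x * f x) = f i0 := by
    intro f
    have : ∀ x : Fin p, e1 x * f x = if x = i0 then f x else 0 := by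
      intro x; by_cases hx : x = i0 <;> simp [e1, hx]
    rw [Finset.sum_congr rfl fun x _ => this x, Finset.sum_ite_eq' Finset.univ i0 f]
    simp
  have hrr' : (∑ x : Fin p, r x * r' x) = c := by
    have : ∀ x : Fin p, r x * r' x = if x ∈ S ∩ S' then ε ^ 2 else 0 := by
      intro x
      by_cases h1 : x ∈ S <;> by_cases h2 : x ∈ S' <;>
        simp [r, r', h1, h2, Finset.mem_inter, sq]
    rw [Finset.sum_congr rfl fun x _ => this x, Finset.sum_ite_mem, Finset.univ_inter,
      Finset.sum_const, hJ, nsmul_eq_mul, hc]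
  -- the entry formula
  have hQ : ∀ i j, Q i j = c * e1 i * e1 j + r i * r' j := by
    intro i j
    have expand : ∀ x : Fin p,
        (Matrix.vecMulVec e1 r + Matrix.vecMulVec r e1) i x *
          (Matrix.vecMulVec e1 r' + Matrix.vecMulVec r' e1) x j
        = (e1 i * r' j) * (r x * e1 x) + (e1 i * e1 j) * (r x * r' x)
          + (r i * r' j) * (e1 x * e1 x) + (r i * e1 j) * (e1 x * r' x) := by
      intro x
      simp only [Matrix.add_apply, Matrix.vecMulVec_apply]
      ring
    rw [show Q i j = ∑ x : Fin p, (Matrix.vecMulVec e1 r + Matrix.vecMulVec r e1) i x *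
          (Matrix.vecMulVec e1 r' + Matrix.vecMulVec r' e1) x j from Matrix.mul_apply,
      Finset.sum_congr rfl fun x _ => expand x]
    simp only [Finset.sum_add_distrib, ← Finset.mul_sum]
    have hA : (∑ x : Fin p, r x * e1 x) = 0 := by
      rw [Finset.sum_congr rfl fun x _ => mul_comm (r x) (e1 x), hsingle r, hri0]
    have hC : (∑ x : Fin p, e1 x * e1 x) = 1 := (hsingle e1).trans he1i0
    have hD : (∑ x : Fin p, e1 x * r' x) = (0:ℝ) := (hsingle r').trans hr'i0
    rw [hA, hrr', hC, hD]
    ring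
  -- the three entry claims
  have bullet1 : Q i0 i0 = c := by
    rw [hQ, he1i0, hri0]; ring
  have bullet2 : ∀ i ∈ S, ∀ j ∈ S', Q i j = ε ^ 2 := by
    intro i hi j hj
    have hii0 : i ≠ i0 := fun h => h0S (h ▸ hi)
    rw [hQ]
    simp [e1, r, r', hi, hj, hii0, sq]
  have bullet3 : ∀ i j : Fin p, ¬(i = i0 ∧ j = i0) → (i ∉ S ∨ j ∉ S') → Q i j = 0 := by
    intro i j hnot hor
    rw [hQ]
    have hsecond : r i * r' j = 0 := by
      rcases hor with h | h <;> simp [r, r', h]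
    have hfirst : c * e1 i * e1 j = 0 := by
      by_cases h1 : i = i0
      · by_cases h2 : j = i0
        · exact absurd ⟨h1, h2⟩ hnot
        · simp [e1, h2]
      · simp [e1, h1]
    rw [hfirst, hsecond, add_zero]
  refine ⟨bullet1, bullet2, bullet3, ?_⟩
  -- the spectral part
  intro hJpos
  have hcne : c ≠ 0 :=
    mul_ne_zero (Nat.cast_ne_zero.mpr hJpos.ne') (pow_ne_zero 2 hε.ne')
  obtain ⟨j1, hj1⟩ : (S ∩ S').Nonempty := Finset.card_pos.mp (by rw [hJ]; exact hJpos)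
  have hj1S : j1 ∈ S := (Finset.mem_inter.mp hj1).1
  have hj1S' : j1 ∈ S' := (Finset.mem_inter.mp hj1).2
  have hj1ne : j1 ≠ i0 := fun h => h0S (h ▸ hj1S)
  haveI : Nonempty (Fin p) := ⟨i0⟩
  -- decomposition Q = A + B
  set A : Matrix (Fin p) (Fin p) ℝ := Matrix.vecMulVec (fun i => c * e1 i) e1 with hAdef
  set B : Matrix (Fin p) (Fin p) ℝ := Matrix.vecMulVec r r' with hBdef
  have hQAB : Q = A + B := by
    ext i j
    rw [hQ]
    simp only [hAdef, hBdef, Matrix.add_apply, Matrix.vecMulVec_apply]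
  have hAB0 : A * B = 0 := by
    ext i j
    rw [Matrix.mul_apply]
    apply Finset.sum_eq_zero
    intro x _
    by_cases hx : x = i0 <;>
      simp [hAdef, hBdef, Matrix.vecMulVec_apply, e1, r, hx, h0S]
  constructor
  -- rank
  · have hmulvec : ∀ x : Fin p → ℝ,
        Q.mulVecLin x = (c * x i0) • e1 + (∑ j : Fin p, r' j * x j) • r := by
      intro x
      funext i
      simp only [Matrix.mulVecLin_apply, Matrix.mulVec, dotProduct, Pi.add_apply,
        Pi.smul_apply, smul_eq_mul]
      have expand2 : ∀ y : Fin p, Q i y * x y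
          = (c * e1 i) * (e1 y * x y) + r i * (r' y * x y) := by
        intro y; rw [hQ]; ring
      rw [Finset.sum_congr rfl fun y _ => expand2 y]
      simp only [Finset.sum_add_distrib, ← Finset.mul_sum]
      rw [hsingle x]
      ring
    have hupper : Q.rank ≤ 2 := by
      have hle : LinearMap.range Q.mulVecLin ≤ Submodule.span ℝ (Set.range ![e1, r]) := by
        rintro y ⟨x, rfl⟩
        rw [hmulvec]
        refine Submodule.add_mem _ (Submodule.smul_mem _ _ ?_) (Submodule.smul_mem _ _ ?_) <;>
          apply Submodule.subset_span
        · exact ⟨0, rfl⟩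
        · exact ⟨1, rfl⟩
      calc Q.rank ≤ Module.finrank ℝ (Submodule.span ℝ (Set.range ![e1, r])) :=
            Submodule.finrank_mono hle
        _ ≤ Fintype.card (Fin 2) := finrank_range_le_card ![e1, r]
        _ = 2 := by simp
    have hlower : 2 ≤ Q.rank := by
      set v1 : Fin p → ℝ := c • e1 with hv1def
      set v2 : Fin p → ℝ := ε • r with hv2def
      have hv1 : v1 ∈ LinearMap.range Q.mulVecLin := by
        refine ⟨Pi.single i0 1, ?_⟩
        rw [hmulvec]
        have hsum : (∑ j : Fin p, r' j * (Pi.single i0 (1:ℝ) : Fin p → ℝ) j) = 0 := by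
          have hterm : ∀ x : Fin p, r' x * (Pi.single i0 (1:ℝ) : Fin p → ℝ) x
              = if x = i0 then r' x else 0 := by
            intro x
            by_cases hx : x = i0
            · subst hx; simp
            · simp [hx, Pi.single_eq_of_ne hx]
          rw [Finset.sum_congr rfl fun x _ => hterm x, Finset.sum_ite_eq' Finset.univ i0 r']
          simp [hr'i0]
        rw [hsum, Pi.single_eq_same, zero_smul, add_zero, mul_one, hv1def]
      have hv2 : v2 ∈ LinearMap.range Q.mulVecLin := by
        refine ⟨Pi.single j1 1, ?_⟩
        rw [hmulvec]
        have hsum : (∑ j : Fin p, r' j * (Pi.single j1 (1:ℝ) : Fin p → ℝ) j) = ε := by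
          have hterm : ∀ x : Fin p, r' x * (Pi.single j1 (1:ℝ) : Fin p → ℝ) x
              = if x = j1 then r' x else 0 := by
            intro x
            by_cases hx : x = j1
            · subst hx; simp
            · simp [hx, Pi.single_eq_of_ne hx]
          rw [Finset.sum_congr rfl fun x _ => hterm x, Finset.sum_ite_eq' Finset.univ j1 r']
          simp [r', hj1S']
        rw [hsum, Pi.single_eq_of_ne (Ne.symm hj1ne), mul_zero, zero_smul, zero_add, hv2def]
      have he1j1 : e1 j1 = 0 := by simp [e1, hj1ne]
      have hrj1 : r j1 = ε := by simp [r, hj1S]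
      have hlin : LinearIndependent ℝ ![v1, v2] := by
        rw [LinearIndependent.pair_iff]
        intro s t hst
        have h0 := congrFun hst i0
        have h1 := congrFun hst j1
        simp only [hv1def, hv2def, Pi.add_apply, Pi.smul_apply, Pi.zero_apply,
          smul_eq_mul] at h0 h1
        rw [he1i0, hri0] at h0
        rw [he1j1, hrj1] at h1
        have hs0 : s = 0 := by
          have h0' : s * c = 0 := by linear_combination h0
          exact (mul_eq_zero.mp h0').resolve_right hcne
        have ht0 : t = 0 := by
          have h1' : t * (ε * ε) = 0 := by linear_combination h1
          exact (mul_eq_zero.mp h1').resolve_right (mul_ne_zero hε.ne' hε.ne')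
        exact ⟨hs0, ht0⟩
      have hspan2 : Module.finrank ℝ (Submodule.span ℝ (Set.range ![v1, v2])) = 2 := by
        rw [finrank_span_eq_card hlin, Fintype.card_fin]
      have hle2 : Submodule.span ℝ (Set.range ![v1, v2]) ≤ LinearMap.range Q.mulVecLin := by
        rw [Submodule.span_le]
        intro y hy
        rw [Matrix.range_cons_cons_empty] at hy
        rcases hy with rfl | rfl
        · exact hv1
        · exact hv2
      calc (2:ℕ) = Module.finrank ℝ (Submodule.span ℝ (Set.range ![v1, v2])) := hspan2.symm
        _ ≤ Module.finrank ℝ (LinearMap.range Q.mulVecLin) := Submodule.finrank_mono hle2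
        _ = Q.rank := rfl
    exact le_antisymm hupper hlower
  -- charpoly
  · have hchmul := aux_charmatrix_mul_of_mul_eq_zero hAB0
    have hdet : A.charpoly * B.charpoly = Polynomial.X ^ p * Q.charpoly := by
      calc A.charpoly * B.charpoly = (A.charmatrix * B.charmatrix).det :=
            (Matrix.det_mul _ _).symm
        _ = ((Polynomial.X : Polynomial ℝ) • (A + B).charmatrix).det := by rw [hchmul]
        _ = Polynomial.X ^ (Fintype.card (Fin p)) * (A + B).charpoly := by
            rw [Matrix.det_smul, Matrix.charpoly]
        _ = Polynomial.X ^ p * Q.charpoly := by rw [← hQAB, Fintype.card_fin]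
    have hdotA : e1 ⬝ᵥ (fun i => c * e1 i) = c := by
      simp only [dotProduct]
      rw [hsingle fun x => c * e1 x, he1i0, mul_one]
    have hdotB : r' ⬝ᵥ r = c := by
      simp only [dotProduct]
      rw [Finset.sum_congr rfl fun x _ => mul_comm (r' x) (r x), hrr']
    have hchA : A.charpoly = Polynomial.X ^ (p - 1) * (Polynomial.X - Polynomial.C c) := by
      rw [hAdef, aux_charpoly_vecMulVec, hdotA, Fintype.card_fin]
    have hchB : B.charpoly = Polynomial.X ^ (p - 1) * (Polynomial.X - Polynomial.C c) := by
      rw [hBdef, aux_charpoly_vecMulVec, hdotB, Fintype.card_fin]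
    have hXp : (Polynomial.X : Polynomial ℝ) ^ p ≠ 0 := pow_ne_zero _ Polynomial.X_ne_zero
    apply mul_left_cancel₀ hXp
    rw [← hdet, hchA, hchB]
    have hexp : p - 1 + (p - 1) = p + (p - 2) := by omega
    calc Polynomial.X ^ (p - 1) * (Polynomial.X - Polynomial.C c) *
          (Polynomial.X ^ (p - 1) * (Polynomial.X - Polynomial.C c))
        = Polynomial.X ^ (p - 1 + (p - 1)) * (Polynomial.X - Polynomial.C c) ^ 2 := by
          rw [pow_add]; ring
      _ = Polynomial.X ^ (p + (p - 2)) * (Polynomial.X - Polynomial.C c) ^ 2 := by rw [hexp]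
      _ = Polynomial.X ^ p * ((Polynomial.X - Polynomial.C c) ^ 2 * Polynomial.X ^ (p - 2)) := by
          rw [pow_add]; ring

end
end

section
/- Let 0 < ε_2 < M_2 and let X, Y be p×p symmetric matrices all of whose eigenvalues lie in [ε_2, M_2]. Then there exist constants c_2 > c_1 > 0 depending only on ε_2 and M_2 such that for every φ ∈ Ψ, c_1 |||X − Y|||_F^2 ≤ D_φ(X, Y) ≤ c_2 |||X − Y|||_F^2. -/
open scoped BigOperators

noncomputable section

/-- Functional calculus for a symmetric real matrix: apply `g` to the eigenvalues in a
spectral decomposition. -/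
def matApply (g : ℝ → ℝ) {p : ℕ} {Y : Matrix (Fin p) (Fin p) ℝ} (hY : Y.IsHermitian) :
    Matrix (Fin p) (Fin p) ℝ :=
  (hY.eigenvectorUnitary : Matrix (Fin p) (Fin p) ℝ) *
    Matrix.diagonal (fun i => g (hY.eigenvalues i)) *
    star (hY.eigenvectorUnitary : Matrix (Fin p) (Fin p) ℝ)

private lemma taylor_lower {f : ℝ → ℝ} {ε M C : ℝ}
    (hd : ∀ x ∈ Set.Icc ε M, DifferentiableAt ℝ f x)
    (hd2 : ∀ x ∈ Set.Icc ε M, DifferentiableAt ℝ (deriv f) x)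
    (hdd : ∀ x ∈ Set.Icc ε M, C ≤ deriv (deriv f) x)
    {a b : ℝ} (ha : a ∈ Set.Icc ε M) (hb : b ∈ Set.Icc ε M) :
    C / 2 * (a - b) ^ 2 ≤ f a - f b - deriv f b * (a - b) := by
  set g : ℝ → ℝ := fun c => f a - f c - deriv f c * (a - c) - C / 2 * (a - c) ^ 2 with hg
  have hga : g a = 0 := by simp [hg]
  have hder : ∀ c ∈ Set.Icc ε M, HasDerivAt g ((C - deriv (deriv f) c) * (a - c)) c := by
    intro c hc
    have h1 : HasDerivAt f (deriv f c) c := (hd c hc).hasDerivAt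
    have h2 : HasDerivAt (deriv f) (deriv (deriv f) c) c := (hd2 c hc).hasDerivAt
    have h3 : HasDerivAt (fun c : ℝ => a - c) (-1) c := by
      simpa using (hasDerivAt_id c).const_sub a
    have h4 : HasDerivAt (fun c => deriv f c * (a - c))
        (deriv (deriv f) c * (a - c) + deriv f c * (-1)) c := h2.mul h3
    have h5 : HasDerivAt (fun c : ℝ => C / 2 * (a - c) ^ 2)
        (C / 2 * ((2 : ℕ) * (a - c) ^ 1 * (-1))) c := (h3.pow 2).const_mul (C / 2)
    have h6 := ((h1.const_sub (f a)).sub h4).sub h5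
    refine HasDerivAt.congr_deriv h6 ?_
    push_cast
    ring
  have key : g a ≤ g b := by
    rcases le_total b a with hba | hab
    · have hsub : Set.Icc b a ⊆ Set.Icc ε M := Set.Icc_subset_Icc hb.1 ha.2
      have hanti : AntitoneOn g (Set.Icc b a) := by
        refine antitoneOn_of_deriv_nonpos (convex_Icc b a) ?_ ?_ ?_
        · intro x hx
          exact ((hder x (hsub hx)).differentiableAt).continuousAt.continuousWithinAt
        · intro x hx
          exact ((hder x (hsub (interior_subset hx))).differentiableAt).differentiableWithinAt
        · intro x hx
          rw [interior_Icc] at hx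
          have hx' : x ∈ Set.Icc ε M := hsub (Set.Ioo_subset_Icc_self hx)
          rw [(hder x hx').deriv]
          have := hdd x hx'
          nlinarith [hx.2]
      exact hanti (Set.left_mem_Icc.2 hba) (Set.right_mem_Icc.2 hba) hba
    · have hsub : Set.Icc a b ⊆ Set.Icc ε M := Set.Icc_subset_Icc ha.1 hb.2
      have hmono : MonotoneOn g (Set.Icc a b) := by
        refine monotoneOn_of_deriv_nonneg (convex_Icc a b) ?_ ?_ ?_
        · intro x hx
          exact ((hder x (hsub hx)).differentiableAt).continuousAt.continuousWithinAt
        · intro x hx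
          exact ((hder x (hsub (interior_subset hx))).differentiableAt).differentiableWithinAt
        · intro x hx
          rw [interior_Icc] at hx
          have hx' : x ∈ Set.Icc ε M := hsub (Set.Ioo_subset_Icc_self hx)
          rw [(hder x hx').deriv]
          have := hdd x hx'
          nlinarith [hx.1]
      exact hmono (Set.left_mem_Icc.2 hab) (Set.right_mem_Icc.2 hab) hab
  rw [hga] at key
  simp only [hg] at key
  linarith

private lemma taylor_upper {f : ℝ → ℝ} {ε M cu : ℝ}
    (hd : ∀ x ∈ Set.Icc ε M, DifferentiableAt ℝ f x)
    (hd2 : ∀ x ∈ Set.Icc ε M, DifferentiableAt ℝ (deriv f) x)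
    (hdd : ∀ x ∈ Set.Icc ε M, deriv (deriv f) x ≤ cu)
    {a b : ℝ} (ha : a ∈ Set.Icc ε M) (hb : b ∈ Set.Icc ε M) :
    f a - f b - deriv f b * (a - b) ≤ cu / 2 * (a - b) ^ 2 := by
  have hderiv : deriv (fun y => -f y) = fun y => -deriv f y := funext fun y => deriv.neg
  have hd' : ∀ x ∈ Set.Icc ε M, DifferentiableAt ℝ (fun y => -f y) x :=
    fun x hx => (hd x hx).neg
  have hd2' : ∀ x ∈ Set.Icc ε M, DifferentiableAt ℝ (deriv (fun y => -f y)) x := by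
    rw [hderiv]; exact fun x hx => (hd2 x hx).neg
  have hdd' : ∀ x ∈ Set.Icc ε M, -cu ≤ deriv (deriv (fun y => -f y)) x := by
    rw [hderiv]
    intro x hx
    rw [deriv.fun_neg]
    linarith [hdd x hx]
  have := taylor_lower hd' hd2' hdd' ha hb
  rw [hderiv] at this
  simp only at this
  linarith

private lemma trace_matApply_mul {p : ℕ} {X Y : Matrix (Fin p) (Fin p) ℝ}
    (hX : X.IsHermitian) (hY : Y.IsHermitian) (g h : ℝ → ℝ) :
    (matApply g hY * matApply h hX).trace =
      ∑ j, ∑ i, ((star (hY.eigenvectorUnitary : Matrix (Fin p) (Fin p) ℝ) *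
          (hX.eigenvectorUnitary : Matrix (Fin p) (Fin p) ℝ)) j i) ^ 2 *
        (g (hY.eigenvalues j) * h (hX.eigenvalues i)) := by
  set V : Matrix (Fin p) (Fin p) ℝ := (hY.eigenvectorUnitary : Matrix (Fin p) (Fin p) ℝ) with hV
  set U : Matrix (Fin p) (Fin p) ℝ := (hX.eigenvectorUnitary : Matrix (Fin p) (Fin p) ℝ) with hU
  set W : Matrix (Fin p) (Fin p) ℝ := star V * U with hW
  have key : matApply g hY * matApply h hX
      = V * (Matrix.diagonal (fun j => g (hY.eigenvalues j)) * W *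
          Matrix.diagonal (fun i => h (hX.eigenvalues i)) * star U) := by
    simp only [matApply, ← hV, ← hU, hW, Matrix.mul_assoc]
  rw [key, Matrix.trace_mul_comm]
  have key2 : Matrix.diagonal (fun j => g (hY.eigenvalues j)) * W *
        Matrix.diagonal (fun i => h (hX.eigenvalues i)) * star U * V
      = Matrix.diagonal (fun j => g (hY.eigenvalues j)) * W *
          Matrix.diagonal (fun i => h (hX.eigenvalues i)) * star W := by
    have hsw : star W = star U * V := by rw [hW, star_mul, star_star]
    rw [hsw, Matrix.mul_assoc]
  rw [key2]
  have entry : ∀ j i, (Matrix.diagonal (fun j => g (hY.eigenvalues j)) * W *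
      Matrix.diagonal (fun i => h (hX.eigenvalues i))) j i
      = g (hY.eigenvalues j) * W j i * h (hX.eigenvalues i) := by
    intro j i
    rw [Matrix.mul_diagonal, Matrix.diagonal_mul]
  set M := Matrix.diagonal (fun j => g (hY.eigenvalues j)) * W *
      Matrix.diagonal (fun i => h (hX.eigenvalues i)) with hM
  simp only [Matrix.trace, Matrix.diag_apply, Matrix.mul_apply, Matrix.star_apply, star_trivial]
  refine Finset.sum_congr rfl fun j _ => Finset.sum_congr rfl fun i _ => ?_
  rw [entry j i]
  ring

private lemma matApply_mul_matApply {p : ℕ} {Y : Matrix (Fin p) (Fin p) ℝ}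
    (hY : Y.IsHermitian) (g h : ℝ → ℝ) :
    matApply g hY * matApply h hY = matApply (fun x => g x * h x) hY := by
  have h1 : star (hY.eigenvectorUnitary : Matrix (Fin p) (Fin p) ℝ) *
      (hY.eigenvectorUnitary : Matrix (Fin p) (Fin p) ℝ) = 1 :=
    Matrix.mem_unitaryGroup_iff'.mp hY.eigenvectorUnitary.2
  simp only [matApply, Matrix.mul_assoc]
  rw [← Matrix.mul_assoc (star _) _ _, h1, Matrix.one_mul,
    ← Matrix.mul_assoc (Matrix.diagonal _) (Matrix.diagonal _) _,
    Matrix.diagonal_mul_diagonal]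

private lemma trace_matApply {p : ℕ} {Y : Matrix (Fin p) (Fin p) ℝ}
    (hY : Y.IsHermitian) (g : ℝ → ℝ) :
    (matApply g hY).trace = ∑ j, g (hY.eigenvalues j) := by
  have h1 : star (hY.eigenvectorUnitary : Matrix (Fin p) (Fin p) ℝ) *
      (hY.eigenvectorUnitary : Matrix (Fin p) (Fin p) ℝ) = 1 :=
    Matrix.mem_unitaryGroup_iff'.mp hY.eigenvectorUnitary.2
  rw [matApply, Matrix.trace_mul_cycle, h1, Matrix.one_mul, Matrix.trace_diagonal]

private lemma spectral' {p : ℕ} {X : Matrix (Fin p) (Fin p) ℝ} (hX : X.IsHermitian) :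
    X = matApply id hX := by
  conv_lhs => rw [hX.spectral_theorem]
  simp [matApply, RCLike.ofReal_real_eq_id, Function.comp]


/-- The Bregman matrix divergence
`D_φ(X, Y) = Σ_i φ(λ_i(X)) - Σ_j φ(λ_j(Y)) - tr(φ'(Y)(X - Y))` associated with
`φ(A) = Σ_i φ(λ_i(A))` (defined to be `0` if `X` or `Y` is not symmetric). -/
def bregmanD (φ : ℝ → ℝ) {p : ℕ} (X Y : Matrix (Fin p) (Fin p) ℝ) : ℝ :=
  if h : X.IsHermitian ∧ Y.IsHermitian then
    (∑ i, φ (h.1.eigenvalues i)) - (∑ j, φ (h.2.eigenvalues j)) -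
      (matApply (deriv φ) h.2 * (X - Y)).trace
  else 0

/-- **Lemma 9 of Cai–Zhou (Bregman divergences are equivalent to the squared Frobenius
norm).**  If all eigenvalues of the symmetric matrices `X` and `Y` lie in `[ε₂, M₂]` with
`0 < ε₂ < M₂`, then there are constants `c₂ > c₁ > 0` (depending only on `ε₂, M₂` and the
second-derivative bounds `c_L ≤ φ'' ≤ c_u` of the class `Ψ` on `[ε₂, M₂]`) such that
`c₁ |||X - Y|||_F² ≤ D_φ(X, Y) ≤ c₂ |||X - Y|||_F²` for every `φ ∈ Ψ`. -/
theorem bregman_equiv_frobenius (ε₂ M₂ : ℝ) (hε₂ : 0 < ε₂) (hεM : ε₂ < M₂)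
    (cL cu : ℝ) (hcL : 0 < cL) (hcLu : cL ≤ cu) :
    ∃ c₁ c₂ : ℝ, 0 < c₁ ∧ c₁ < c₂ ∧
      ∀ (p : ℕ) (X Y : Matrix (Fin p) (Fin p) ℝ)
        (hX : X.IsHermitian) (hY : Y.IsHermitian),
        (∀ i, hX.eigenvalues i ∈ Set.Icc ε₂ M₂) →
        (∀ i, hY.eigenvalues i ∈ Set.Icc ε₂ M₂) →
        ∀ φ : ℝ → ℝ,
          (∀ x ∈ Set.Ioi (0 : ℝ), DifferentiableAt ℝ φ x) →
          (∀ x ∈ Set.Ioi (0 : ℝ), DifferentiableAt ℝ (deriv φ) x) →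
          StrictConvexOn ℝ (Set.Ioi (0 : ℝ)) φ →
          (∃ C r : ℝ, 0 < C ∧ ∀ x : ℝ, 0 < x → |φ x| ≤ C * x ^ r) →
          (∀ x ∈ Set.Icc ε₂ M₂, cL ≤ deriv (deriv φ) x ∧ deriv (deriv φ) x ≤ cu) →
          c₁ * (∑ i, ∑ j, ((X - Y) i j) ^ 2) ≤ bregmanD φ X Y ∧
            bregmanD φ X Y ≤ c₂ * (∑ i, ∑ j, ((X - Y) i j) ^ 2) := by
  refine ⟨cL / 2, cu, by linarith, by linarith, ?_⟩
  intro p X Y hX hY hXev hYev φ hφd hφd2 _hconv _hbound hφ''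
  set V : Matrix (Fin p) (Fin p) ℝ := (hY.eigenvectorUnitary : Matrix (Fin p) (Fin p) ℝ) with hV
  set U : Matrix (Fin p) (Fin p) ℝ := (hX.eigenvectorUnitary : Matrix (Fin p) (Fin p) ℝ) with hU
  set W : Matrix (Fin p) (Fin p) ℝ := star V * U with hW
  set lam := hX.eigenvalues with hlam
  set gam := hY.eigenvalues with hgam
  -- unitarity facts
  have hUU' : U * star U = 1 := Matrix.mem_unitaryGroup_iff.mp hX.eigenvectorUnitary.2
  have hUU : star U * U = 1 := Matrix.mem_unitaryGroup_iff'.mp hX.eigenvectorUnitary.2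
  have hVV' : V * star V = 1 := Matrix.mem_unitaryGroup_iff.mp hY.eigenvectorUnitary.2
  have hVV : star V * V = 1 := Matrix.mem_unitaryGroup_iff'.mp hY.eigenvectorUnitary.2
  have hWs : star W = star U * V := by rw [hW, star_mul, star_star]
  have hWW : W * star W = 1 := by
    have : W * star W = star V * (U * star U * V) := by
      rw [hW, hWs]; simp only [Matrix.mul_assoc]
    rw [this, hUU', Matrix.one_mul, hVV]
  have hWW' : star W * W = 1 := by
    have : star W * W = star U * (V * star V * U) := by
      rw [hW, hWs]; simp only [Matrix.mul_assoc]
    rw [this, hVV', Matrix.one_mul, hUU]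
  have hrow : ∀ j, ∑ i, (W j i) ^ 2 = 1 := by
    intro j
    have h1 : (W * star W) j j = ∑ i, W j i * W j i := by
      simp [Matrix.mul_apply, Matrix.star_apply]
    rw [hWW] at h1
    simp only [Matrix.one_apply_eq] at h1
    simpa [pow_two] using h1.symm
  have hcol : ∀ i, ∑ j, (W j i) ^ 2 = 1 := by
    intro i
    have h1 : (star W * W) i i = ∑ j, W j i * W j i := by
      simp [Matrix.mul_apply, Matrix.star_apply, mul_comm]
    rw [hWW'] at h1
    simp only [Matrix.one_apply_eq] at h1
    simpa [pow_two] using h1.symm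
  have swap1 : ∀ f : Fin p → ℝ, (∑ j, ∑ i, (W j i) ^ 2 * f i) = ∑ i, f i := by
    intro f
    rw [Finset.sum_comm]
    exact Finset.sum_congr rfl fun i _ => by rw [← Finset.sum_mul, hcol i, one_mul]
  have swap2 : ∀ f : Fin p → ℝ, (∑ j, ∑ i, (W j i) ^ 2 * f j) = ∑ j, f j := by
    intro f
    exact Finset.sum_congr rfl fun j _ => by rw [← Finset.sum_mul, hrow j, one_mul]
  have hXs : X = matApply id hX := by
    conv_lhs => rw [hX.spectral_theorem]
    simp [matApply, RCLike.ofReal_real_eq_id, Function.comp, ← hU]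
  have hYs : Y = matApply id hY := by
    conv_lhs => rw [hY.spectral_theorem]
    simp [matApply, RCLike.ofReal_real_eq_id, Function.comp, ← hV]
  -- trace identities
  have e1 : (matApply (deriv φ) hY * X).trace
      = ∑ j, ∑ i, (W j i) ^ 2 * (deriv φ (gam j) * lam i) := by
    conv_lhs => rw [hXs]
    exact trace_matApply_mul hX hY (deriv φ) id
  have e2 : (matApply (deriv φ) hY * Y).trace
      = ∑ j, ∑ i, (W j i) ^ 2 * (deriv φ (gam j) * gam j) := by
    have h := congrArg (fun Z : Matrix (Fin p) (Fin p) ℝ =>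
      (matApply (deriv φ) hY * Z).trace) hYs
    rw [h, matApply_mul_matApply, trace_matApply]
    exact (swap2 (fun j => deriv φ (gam j) * gam j)).symm
  have hD : bregmanD φ X Y = ∑ j, ∑ i, (W j i) ^ 2 *
      (φ (lam i) - φ (gam j) - deriv φ (gam j) * (lam i - gam j)) := by
    rw [bregmanD, dif_pos ⟨hX, hY⟩]
    rw [Matrix.mul_sub, Matrix.trace_sub, e1, e2]
    rw [← swap1 (fun i => φ (lam i)), ← swap2 (fun j => φ (gam j))]
    simp only [← Finset.sum_sub_distrib]
    exact Finset.sum_congr rfl fun j _ => Finset.sum_congr rfl fun i _ => by ring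
  -- Frobenius identity
  have hA : (X - Y).IsHermitian := hX.sub hY
  have f1 : (∑ i, ∑ j, ((X - Y) i j) ^ 2) = ((X - Y) * (X - Y)).trace := by
    rw [Matrix.trace]
    refine Finset.sum_congr rfl fun i _ => ?_
    simp only [Matrix.diag_apply, Matrix.mul_apply]
    refine Finset.sum_congr rfl fun j _ => ?_
    rw [pow_two]
    congr 1
    exact (star_trivial _).symm.trans (hA.apply j i)
  have fXX : (X * X).trace = ∑ j, ∑ i, (W j i) ^ 2 * (lam i * lam i) := by
    conv_lhs => rw [hXs]
    rw [matApply_mul_matApply, trace_matApply]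
    exact (swap1 (fun i => lam i * lam i)).symm
  have fYY : (Y * Y).trace = ∑ j, ∑ i, (W j i) ^ 2 * (gam j * gam j) := by
    have h := congrArg (fun Z : Matrix (Fin p) (Fin p) ℝ => (Z * Z).trace) hYs
    rw [h, matApply_mul_matApply, trace_matApply]
    exact (swap2 (fun j => gam j * gam j)).symm
  have fXY : (X * Y).trace = ∑ j, ∑ i, (W j i) ^ 2 * (gam j * lam i) := by
    rw [Matrix.trace_mul_comm]
    conv_lhs => rw [hXs, hYs]
    exact trace_matApply_mul hX hY id id
  have hF : (∑ i, ∑ j, ((X - Y) i j) ^ 2)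
      = ∑ j, ∑ i, (W j i) ^ 2 * (lam i - gam j) ^ 2 := by
    rw [f1, Matrix.sub_mul, Matrix.mul_sub, Matrix.mul_sub, Matrix.trace_sub,
      Matrix.trace_sub, Matrix.trace_sub, fXX, fYY, fXY, Matrix.trace_mul_comm Y X, fXY]
    simp only [← Finset.sum_sub_distrib]
    exact Finset.sum_congr rfl fun j _ => Finset.sum_congr rfl fun i _ => by ring
  -- scalar hypotheses
  have hd' : ∀ x ∈ Set.Icc ε₂ M₂, DifferentiableAt ℝ φ x :=
    fun x hx => hφd x (lt_of_lt_of_le hε₂ hx.1)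
  have hd2' : ∀ x ∈ Set.Icc ε₂ M₂, DifferentiableAt ℝ (deriv φ) x :=
    fun x hx => hφd2 x (lt_of_lt_of_le hε₂ hx.1)
  have hlow : ∀ x ∈ Set.Icc ε₂ M₂, cL ≤ deriv (deriv φ) x := fun x hx => (hφ'' x hx).1
  have hup : ∀ x ∈ Set.Icc ε₂ M₂, deriv (deriv φ) x ≤ cu := fun x hx => (hφ'' x hx).2
  constructor
  · rw [hD, hF, Finset.mul_sum]
    refine Finset.sum_le_sum fun j _ => ?_
    rw [Finset.mul_sum]
    refine Finset.sum_le_sum fun i _ => ?_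
    have hkey := taylor_lower hd' hd2' hlow (hXev i) (hYev j)
    have hsq : (0:ℝ) ≤ (W j i) ^ 2 := sq_nonneg _
    calc cL / 2 * ((W j i) ^ 2 * (lam i - gam j) ^ 2)
        = (W j i) ^ 2 * (cL / 2 * (lam i - gam j) ^ 2) := by ring
      _ ≤ (W j i) ^ 2 * (φ (lam i) - φ (gam j) - deriv φ (gam j) * (lam i - gam j)) :=
        mul_le_mul_of_nonneg_left hkey hsq
  · rw [hD, hF, Finset.mul_sum]
    refine Finset.sum_le_sum fun j _ => ?_
    rw [Finset.mul_sum]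
    refine Finset.sum_le_sum fun i _ => ?_
    have hkey := taylor_upper hd' hd2' hup (hXev i) (hYev j)
    have hsq : (0:ℝ) ≤ (W j i) ^ 2 := sq_nonneg _
    calc (W j i) ^ 2 * (φ (lam i) - φ (gam j) - deriv φ (gam j) * (lam i - gam j))
        ≤ (W j i) ^ 2 * (cu / 2 * (lam i - gam j) ^ 2) := mul_le_mul_of_nonneg_left hkey hsq
      _ ≤ cu * ((W j i) ^ 2 * (lam i - gam j) ^ 2) := by
          nlinarith [sq_nonneg (W j i), sq_nonneg (lam i - gam j), sq_nonneg ((W j i) * (lam i - gam j))]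


end
end

section
/- Let m, k, j be integers with 0 ≤ j ≤ k and m ≥ 2k, and with k < m − k (so that k^2/(m − k) is well defined and positive). Then the hypergeometric probability satisfies C(k, j) · C(m − k, k − j) / C(m, k) ≤ ( k^2 / (m − k) )^j, where C(a, b) denotes the binomial coefficient a choose b. -/
lemma aux_choose_shift (j : ℕ) : ∀ m k : ℕ, j ≤ k → k ≤ m →
    Nat.choose (m - j) (k - j) * (m - k) ^ j ≤ k ^ j * Nat.choose m k := by
  induction j with
  | zero => simp
  | succ j ih =>
    intro m k hj hk
    have hk1 : 1 ≤ k := le_trans (Nat.succ_le_succ (Nat.zero_le j)) hj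
    have hm1 : 1 ≤ m := le_trans hk1 hk
    have hsub : m - k = (m - 1) - (k - 1) := by omega
    have hsub2 : m - (j + 1) = (m - 1) - j := by omega
    have hsub3 : k - (j + 1) = (k - 1) - j := by omega
    have hid : m * Nat.choose (m - 1) (k - 1) = Nat.choose m k * k := by
      have h0 := Nat.add_one_mul_choose_eq (m - 1) (k - 1)
      have e1 : m - 1 + 1 = m := by omega
      have e2 : k - 1 + 1 = k := by omega
      rwa [e1, e2] at h0
    have hIH := ih (m - 1) (k - 1) (by omega) (by omega)
    calc Nat.choose (m - (j + 1)) (k - (j + 1)) * (m - k) ^ (j + 1)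
        = Nat.choose ((m-1) - j) ((k-1) - j) * ((m-1) - (k-1)) ^ j * (m - k) := by
          rw [hsub2, hsub3, ← hsub, pow_succ, mul_assoc]
      _ ≤ (k - 1) ^ j * Nat.choose (m-1) (k-1) * (m - k) :=
          Nat.mul_le_mul_right _ hIH
      _ ≤ k ^ j * Nat.choose (m-1) (k-1) * m := by
          apply Nat.mul_le_mul
          · exact Nat.mul_le_mul_right _ (Nat.pow_le_pow_left (Nat.sub_le k 1) j)
          · omega
      _ = k ^ j * (m * Nat.choose (m-1) (k-1)) := by ring
      _ = k ^ (j + 1) * Nat.choose m k := by rw [hid]; ring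

/-- **Hypergeometric tail bound.**  For integers `0 ≤ j ≤ k` and `m ≥ 2k` with `k < m - k`,
the hypergeometric probability `C(k,j) C(m-k, k-j) / C(m,k)` is at most `(k² / (m-k))^j`. -/
theorem hypergeometric_prob_le (m k j : ℕ) (hj : j ≤ k) (hm : 2 * k ≤ m) (hkm : k < m - k) :
    ((Nat.choose k j : ℝ) * (Nat.choose (m - k) (k - j) : ℝ)) / (Nat.choose m k : ℝ) ≤
      ((k : ℝ) ^ 2 / ((m : ℝ) - (k : ℝ))) ^ j := by
  have hkm' : k ≤ m := by omega
  have hnat : Nat.choose k j * (Nat.choose (m - k) (k - j) * (m - k) ^ j)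
      ≤ k ^ (2 * j) * Nat.choose m k := by
    calc Nat.choose k j * (Nat.choose (m - k) (k - j) * (m - k) ^ j)
        ≤ k ^ j * (Nat.choose (m - j) (k - j) * (m - k) ^ j) := by
          apply Nat.mul_le_mul (Nat.choose_le_pow k j)
          exact Nat.mul_le_mul_right _ (Nat.choose_le_choose _ (by omega))
      _ ≤ k ^ j * (k ^ j * Nat.choose m k) :=
          Nat.mul_le_mul_left _ (aux_choose_shift j m k hj hkm')
      _ = k ^ (2 * j) * Nat.choose m k := by rw [two_mul, pow_add]; ring
  have hmk : ((m : ℝ) - (k : ℝ)) = ((m - k : ℕ) : ℝ) := by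
    rw [Nat.cast_sub hkm']
  have hmkpos : (0 : ℝ) < ((m - k : ℕ) : ℝ) := by
    have : 0 < m - k := by omega
    exact_mod_cast this
  have hC : (0 : ℝ) < (Nat.choose m k : ℝ) := by
    exact_mod_cast Nat.choose_pos hkm'
  rw [hmk, div_pow, div_le_div_iff₀ hC (by positivity)]
  have := hnat
  have hcast : ((Nat.choose k j : ℝ) * (Nat.choose (m - k) (k - j) : ℝ)) * ((m - k : ℕ) : ℝ) ^ j
      ≤ ((k : ℝ) ^ 2) ^ j * (Nat.choose m k : ℝ) := by
    have : ((Nat.choose k j * (Nat.choose (m - k) (k - j) * (m - k) ^ j) : ℕ) : ℝ)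
        ≤ ((k ^ (2 * j) * Nat.choose m k : ℕ) : ℝ) := by exact_mod_cast hnat
    push_cast at this
    calc ((Nat.choose k j : ℝ) * (Nat.choose (m - k) (k - j) : ℝ)) * ((m - k : ℕ) : ℝ) ^ j
        = (Nat.choose k j : ℝ) * ((Nat.choose (m - k) (k - j) : ℝ) * ((m - k : ℕ) : ℝ) ^ j) := by ring
      _ ≤ (k : ℝ) ^ (2 * j) * (Nat.choose m k : ℝ) := this
      _ = ((k : ℝ) ^ 2) ^ j * (Nat.choose m k : ℝ) := by rw [← pow_mul]
  linarith [hcast]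
end
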